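/- Let k ≥ 1 and let α > 0 and t be real numbers such that α + t > 0. Then γ + (ln k − γ)/k + ψ(α+t) − ψ_k(α+t) ≥ 0. -/

import Mathlib

open Real

/-- The digamma (psi) function: logarithmic derivative of the Gamma function. -/
noncomputable def psi (t : ℝ) : ℝ := deriv Real.Gamma t / Real.Gamma t

/-- The k-digamma function, defined via its series representation
`ψ_k(t) = (ln k − γ)/k − 1/t + ∑_{n=1}^∞ t/(nk(nk+t))`. -/
noncomputable def psik (k t : ℝ) : ℝ :=
  (Real.log k - eulerMascheroniConstant) / k - 1 / t +
    ∑' n : ℕ, t / (((n : ℝ) + 1) * k * (((n : ℝ) + 1) * k + t))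


open Filter Topology Set

local notation "γ" => Real.eulerMascheroniConstant

lemma S_summable (x : ℝ) (hx : 0 < x) :
    Summable (fun n : ℕ => x / (((n : ℝ) + 1) * (((n : ℝ) + 1) + x))) := by
  have h2 : Summable (fun n : ℕ => x * (1 / ((n : ℝ) + 1) ^ 2)) := by
    apply Summable.mul_left
    have := (Real.summable_one_div_nat_pow (p := 2)).mpr one_lt_two
    have := (summable_nat_add_iff 1).mpr this
    simpa using this
  refine Summable.of_nonneg_of_le (fun n => by positivity) (fun n => ?_) h2
  rw [mul_one_div]
  apply div_le_div_of_nonneg_left hx.le (by positivity)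
  have : ((n : ℝ) + 1) ^ 2 = ((n : ℝ) + 1) * ((n : ℝ) + 1) := sq _
  rw [this]
  have : (0:ℝ) < (n:ℝ) + 1 := by positivity
  nlinarith


lemma psi_ge (x : ℝ) (hx : 0 < x) :
    psi x ≥ -γ - 1 / x + ∑' n : ℕ, x / (((n : ℝ) + 1) * (((n : ℝ) + 1) + x)) := by
  set f : ℝ → ℝ := Real.log ∘ Real.Gamma with hf
  have hc : ConvexOn ℝ (Ioi 0) f := Real.convexOn_log_Gamma
  have hder : ∀ {y : ℝ}, 0 < y → DifferentiableAt ℝ f y := by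
    intro y hy
    refine ((Real.differentiableAt_Gamma ?_).log (Real.Gamma_ne_zero ?_)) <;>
      exact fun m => ne_of_gt (lt_of_le_of_lt (neg_nonpos.mpr (Nat.cast_nonneg m)) hy)
  have h_rec : ∀ y : ℝ, 0 < y → f (y + 1) = f y + Real.log y := by
    intro y hy
    simp only [hf, Function.comp_apply, Real.Gamma_add_one hy.ne',
      Real.log_mul hy.ne' (Real.Gamma_pos_of_pos hy).ne', add_comm]
  have hpsi : psi x = deriv f x := by
    rw [psi, hf]
    rw [show (Real.log ∘ Real.Gamma) = fun y => Real.log (Real.Gamma y) from rfl]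
    rw [deriv.log (Real.differentiableAt_Gamma fun m =>
        ne_of_gt (lt_of_le_of_lt (neg_nonpos.mpr (Nat.cast_nonneg m)) hx))
      (Real.Gamma_pos_of_pos hx).ne']
  have hder_rec : ∀ y : ℝ, 0 < y → deriv f (y + 1) = deriv f y + 1 / y := by
    intro y hy
    rw [← deriv_comp_add_const, one_div, ← Real.deriv_log,
      ← deriv_add (hder hy) (Real.differentiableAt_log hy.ne')]
    apply Filter.EventuallyEq.deriv_eq
    filter_upwards [eventually_gt_nhds hy] using h_rec
  -- iterated recurrence
  have key : ∀ N : ℕ, deriv f (x + N + 1) =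
      deriv f x + ∑ j ∈ Finset.range (N + 1), 1 / (x + j) := by
    intro N
    induction N with
    | zero => simpa using hder_rec x hx
    | succ n ih =>
      have h1 : x + ((n + 1 : ℕ) : ℝ) + 1 = (x + n + 1) + 1 := by push_cast; ring
      rw [h1, hder_rec _ (by positivity), ih,
        Finset.sum_range_succ (fun j : ℕ => 1 / (x + (j : ℝ))) (n + 1)]
      push_cast
      ring
  -- convexity lower bound
  have lb : ∀ N : ℕ, Real.log (x + N) ≤ deriv f (x + N + 1) := by
    intro N
    have h0 : (0:ℝ) < x + N := by positivity
    refine (le_of_eq ?_).trans <| hc.slope_le_deriv (mem_Ioi.mpr h0)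
      (mem_Ioi.mpr (by positivity)) (by linarith) (hder (by positivity))
    rw [slope_def_field, show x + N + 1 - (x + N) = (1:ℝ) by ring, div_one,
      h_rec _ h0, add_sub_cancel_left]
  -- lower bound for deriv f x
  have lbx : ∀ N : ℕ, Real.log (x + N) - ∑ j ∈ Finset.range (N + 1), 1 / (x + j)
      ≤ deriv f x := by
    intro N
    have := lb N
    rw [key N] at this
    linarith
  -- limit of the lower bound
  have hS := S_summable x hx
  set S := ∑' n : ℕ, x / (((n : ℝ) + 1) * (((n : ℝ) + 1) + x)) with hSdef
  have hA : Tendsto (fun N : ℕ => ∑ j ∈ Finset.range N,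
      x / (((j : ℝ) + 1) * (((j : ℝ) + 1) + x))) atTop (𝓝 S) :=
    hS.hasSum.tendsto_sum_nat
  have hlog : Tendsto (fun N : ℕ => Real.log (x + N) - Real.log N) atTop (𝓝 0) := by
    have h1 : Tendsto (fun N : ℕ => x / (N : ℝ) + 1) atTop (𝓝 1) := by
      simpa using (tendsto_const_div_atTop_nhds_zero_nat x).add_const 1
    have h2 : Tendsto (fun N : ℕ => Real.log (x / N + 1)) atTop (𝓝 0) := by
      have := (Real.continuousAt_log one_ne_zero).tendsto.comp h1
      simpa [Function.comp_def] using this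
    apply h2.congr'
    filter_upwards [eventually_gt_atTop 0] with N hN
    have hN0 : (0:ℝ) < N := by exact_mod_cast hN
    rw [← Real.log_div (by positivity) hN0.ne']
    congr 1
    field_simp
  have hγ : Tendsto (fun N : ℕ => (harmonic N : ℝ) - Real.log N) atTop (𝓝 γ) :=
    Real.tendsto_harmonic_sub_log
  have hdecomp : ∀ᶠ N : ℕ in atTop,
      Real.log (x + N) - ∑ j ∈ Finset.range (N + 1), 1 / (x + j) =
      (∑ j ∈ Finset.range N, x / (((j : ℝ) + 1) * (((j : ℝ) + 1) + x)))
        + (Real.log (x + N) - Real.log N) - ((harmonic N : ℝ) - Real.log N) - 1 / x := by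
    filter_upwards with N
    have hsplit : ∑ j ∈ Finset.range (N + 1), 1 / (x + j) =
        (∑ j ∈ Finset.range N, 1 / (x + ((j + 1 : ℕ) : ℝ))) + 1 / (x + ((0 : ℕ) : ℝ)) :=
      Finset.sum_range_succ' _ _
    have hhar : (harmonic N : ℝ) = ∑ j ∈ Finset.range N, 1 / ((j : ℝ) + 1) := by
      rw [harmonic]
      push_cast
      simp [one_div]
    have hterm : ∀ j ∈ Finset.range N,
        x / (((j : ℝ) + 1) * (((j : ℝ) + 1) + x)) =
          1 / ((j:ℝ)+1) - 1 / (x + ((j + 1 : ℕ) : ℝ)) := by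
      intro j _
      have h1 : (0:ℝ) < (j:ℝ) + 1 := by positivity
      have h2 : (0:ℝ) < x + ((j + 1 : ℕ) : ℝ) := by positivity
      rw [div_sub_div _ _ h1.ne' h2.ne', div_eq_div_iff (by positivity) (by positivity)]
      push_cast
      ring
    rw [hsplit, Finset.sum_congr rfl hterm, Finset.sum_sub_distrib, hhar]
    push_cast
    ring
  have hlim : Tendsto (fun N : ℕ =>
      Real.log (x + N) - ∑ j ∈ Finset.range (N + 1), 1 / (x + j)) atTop
      (𝓝 (S + 0 - γ - 1 / x)) := by
    apply Tendsto.congr' (hdecomp.mono fun N h => h.symm)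
    exact (((hA.add hlog).sub hγ).sub_const (1 / x))
  rw [hpsi, ge_iff_le]
  have : S + 0 - γ - 1/x = -γ - 1/x + S := by ring
  rw [this] at hlim
  exact le_of_tendsto hlim (Filter.Eventually.of_forall lbx)

theorem psi_psik_lemma (k : ℝ) (hk : 1 ≤ k) (α t : ℝ) (hα : 0 < α)
    (hαt : 0 < α + t) :
    eulerMascheroniConstant + (Real.log k - eulerMascheroniConstant) / k +
      psi (α + t) - psik k (α + t) ≥ 0 := by
  set x := α + t with hxd
  have hx : 0 < x := hαt
  have hk0 : (0:ℝ) < k := lt_of_lt_of_le one_pos hk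
  have hS := S_summable x hx
  have hterm : ∀ n : ℕ, x / (((n : ℝ) + 1) * k * (((n : ℝ) + 1) * k + x)) ≤
      x / (((n : ℝ) + 1) * (((n : ℝ) + 1) + x)) := by
    intro n
    have h1 : (0:ℝ) < (n:ℝ) + 1 := by positivity
    apply div_le_div_of_nonneg_left hx.le (by positivity)
    have : (n:ℝ) + 1 ≤ ((n:ℝ) + 1) * k := le_mul_of_one_le_right h1.le hk
    nlinarith
  have hSk : Summable (fun n : ℕ => x / (((n : ℝ) + 1) * k * (((n : ℝ) + 1) * k + x))) :=
    Summable.of_nonneg_of_le (fun n => by positivity) hterm hS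
  have hle : (∑' n : ℕ, x / (((n : ℝ) + 1) * k * (((n : ℝ) + 1) * k + x))) ≤
      ∑' n : ℕ, x / (((n : ℝ) + 1) * (((n : ℝ) + 1) + x)) :=
    Summable.tsum_le_tsum hterm hSk hS
  have := psi_ge x hx
  rw [psik]
  rw [ge_iff_le] at this ⊢
  linarith
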